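/- In the Hopf algebra H^{dif} = \mathbb{C}\langle a_1, a_2, \ldots \rangle with co-product \Delta a_n = \sum_{k=0}^{n} a_k \otimes Q_{n-k}^{(k)}(a) (where a_0 = 1), the antipode S satisfies the explicit non-recursive formula S a_n = -a_n - \sum_{k=1}^{n-1} (-1)^k \sum_{n_1+\cdots+n_{k+1}=n, n_i > 0} \lambda(n_1,\ldots,n_k) a_{n_1}\cdots a_{n_k} a_{n_{k+1}}, where \lambda(n_1,\ldots,n_k) = \sum \binom{n_1+1}{m_1}\cdots\binom{n_k+1}{m_k}, the sum being over non-negative integers m_1, \ldots, m_k with m_1+\cdots+m_k = k and m_1+\cdots+m_h \ge h for h = 1, \ldots, k-1. -/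

import Mathlib

open Finset

noncomputable section

/-- The non-commutative Hopf algebra of formal diffeomorphisms, as an algebra:
the free associative algebra over `ℂ` on generators `a 1, a 2, …`. -/
abbrev Hd : Type := FreeAlgebra ℂ {n : ℕ // 0 < n}

/-- The generators `a n`, with the convention `a 0 = 1`. -/
def a (n : ℕ) : Hd := if h : 0 < n then FreeAlgebra.ι ℂ ⟨n, h⟩ else 1

/-- `Q k m` is the polynomial `Q_m^{(k-1)}(a) = ∑_{j_0+⋯+j_{k-1} = m} a_{j_0} ⋯ a_{j_{k-1}}`,
the sum over `k`-tuples of non-negative integers with sum `m`.  In particular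
`Q (n+1) m` is `Q_m^{(n)}(a)` of the paper, and `Q 0 m = Q_m^{(-1)}(a) = δ_{m,0}`. -/
def Q (k m : ℕ) : Hd :=
  ∑ j ∈ Finset.Nat.antidiagonalTuple k m, (List.ofFn fun i => a (j i)).prod


/-- The antipode of `H^dif` on the generators, defined by the graded-connected recursion
`S a_n = -a_n - ∑_{p=1}^{n-1} (S a_p) Q_{n-p}^{(p)}(a)`. -/
def Sgen : ℕ → Hd
  | n =>
    -(a n) - ∑ p ∈ (Finset.Icc 1 (n - 1)).attach, Sgen p.1 * Q (p.1 + 1) (n - p.1)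
decreasing_by
  have h := p.2
  simp only [Finset.mem_Icc] at h
  omega

/-- `Mset k`: `k`-tuples of non-negative integers with total sum `k` and partial sums
`m_1 + ⋯ + m_h ≥ h` for `h = 1, …, k-1`. -/
def Mset (k : ℕ) : Finset (Fin k → ℕ) :=
  (Finset.Nat.antidiagonalTuple k k).filter
    (fun m => ∀ h < k, h ≤ ∑ i ∈ Finset.univ.filter (fun i : Fin k => (i : ℕ) < h), m i)

/-- The coefficient `λ(n_1,…,n_k) = ∑_{m ∈ M_k} C(n_1+1,m_1) ⋯ C(n_k+1,m_k)`. -/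
def lam (k : ℕ) (nv : Fin k → ℕ) : ℕ :=
  ∑ m ∈ Mset k, ∏ i, (nv i + 1).choose (m i)

/-! ### Scalar part -/

/-- partial sums -/
def psum (f : ℕ → ℕ) (s : ℕ) : ℕ := ∑ i ∈ Finset.range s, f i

/-- `lam` with an `ℕ → ℕ` argument -/
def lamf (f : ℕ → ℕ) (k : ℕ) : ℕ := lam k (fun i => f i)

/-- constrained count with conditions up to `h = K` -/
def gfun (f : ℕ → ℕ) (K t : ℕ) : ℕ :=
  ∑ m ∈ (Finset.Nat.antidiagonalTuple K t).filter
      (fun m => ∀ h ≤ K, h ≤ ∑ i ∈ Finset.univ.filter (fun i : Fin K => (i : ℕ) < h), m i),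
    ∏ i, (f i.val + 1).choose (m i)

lemma lamf_congr {f g : ℕ → ℕ} (k : ℕ) (h : ∀ i < k, f i = g i) : lamf f k = lamf g k := by
  have : (fun i : Fin k => f i) = (fun i : Fin k => g i) := funext fun i => h i i.2
  rw [lamf, lamf, this]

lemma gfun_eq_zero_of_lt {f : ℕ → ℕ} {K t : ℕ} (h : t < K) : gfun f K t = 0 := by
  unfold gfun
  rw [Finset.filter_eq_empty_iff.2, Finset.sum_empty]
  intro m hm
  rw [Finset.Nat.mem_antidiagonalTuple] at hm
  push_neg
  refine ⟨K, le_rfl, ?_⟩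
  calc ∑ i ∈ Finset.univ.filter (fun i : Fin K => (i : ℕ) < K), m i
      ≤ ∑ i, m i := Finset.sum_le_sum_of_subset (Finset.filter_subset _ _)
    _ = t := hm
    _ < K := h

lemma gfun_self (f : ℕ → ℕ) (K : ℕ) : gfun f K K = lamf f K := by
  unfold gfun lamf lam Mset
  congr 1
  apply Finset.filter_congr
  intro m hm
  rw [Finset.Nat.mem_antidiagonalTuple] at hm
  constructor
  · intro H h hh; exact H h hh.le
  · intro H h hh
    rcases lt_or_eq_of_le hh with hlt | heq
    · exact H h hlt
    · subst heq
      have : Finset.univ.filter (fun i : Fin h => (i : ℕ) < h) = Finset.univ := by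
        apply Finset.filter_true_of_mem
        intro i _; exact i.2
      rw [this, hm]

lemma gfun_zero (f : ℕ → ℕ) (t : ℕ) : gfun f 0 t = if t = 0 then 1 else 0 := by
  unfold gfun
  rcases t with _ | t
  · simp [Finset.Nat.antidiagonalTuple_zero_zero]
  · simp [Finset.Nat.antidiagonalTuple_zero_succ]

/-- splitting the last coordinate of an antidiagonal tuple -/
lemma sum_antidiagonalTuple_succ {M : Type*} [AddCommMonoid M] (k m : ℕ)
    (F : (Fin (k+1) → ℕ) → M) :
    ∑ j ∈ Finset.Nat.antidiagonalTuple (k+1) m, F j =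
      ∑ uv ∈ Finset.HasAntidiagonal.antidiagonal m, ∑ j ∈ Finset.Nat.antidiagonalTuple k uv.1,
        F (Fin.snoc j uv.2) := by
  rw [Finset.sum_sigma']
  refine (Finset.sum_nbij' (fun v => (⟨(∑ i : Fin k, v i.castSucc, v (Fin.last k)),
      Fin.init v⟩ : Σ _ : ℕ × ℕ, (Fin k → ℕ)))
    (fun x => Fin.snoc x.2 x.1.2) ?_ ?_ ?_ ?_ ?_)
  · intro v hv
    rw [Finset.Nat.mem_antidiagonalTuple] at hv
    rw [Finset.mem_sigma]
    constructor
    · rw [Finset.HasAntidiagonal.mem_antidiagonal]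
      rw [← hv, Fin.sum_univ_castSucc]
    · rw [Finset.Nat.mem_antidiagonalTuple]
      rfl
  · intro x hx
    rw [Finset.mem_sigma, Finset.HasAntidiagonal.mem_antidiagonal, Finset.Nat.mem_antidiagonalTuple] at hx
    rw [Finset.Nat.mem_antidiagonalTuple, Fin.sum_univ_castSucc]
    simp only [Fin.snoc_castSucc, Fin.snoc_last]
    rw [hx.2, hx.1]
  · intro v _
    exact Fin.snoc_init_self v
  · intro x hx
    rcases x with ⟨⟨u, w⟩, j⟩
    rw [Finset.mem_sigma, Finset.HasAntidiagonal.mem_antidiagonal, Finset.Nat.mem_antidiagonalTuple] at hx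
    simp only [Fin.snoc_last, Fin.init_snoc]
    congr 2
    simp only [Fin.snoc_castSucc]
    exact hx.2
  · intro v _
    rw [Fin.snoc_init_self]

lemma gfun_succ (f : ℕ → ℕ) (K t : ℕ) (ht : K + 1 ≤ t) :
    gfun f (K+1) t = ∑ uv ∈ Finset.HasAntidiagonal.antidiagonal t, gfun f K uv.1 * (f K + 1).choose uv.2 := by
  unfold gfun
  rw [Finset.sum_filter, sum_antidiagonalTuple_succ]
  apply Finset.sum_congr rfl
  intro uv huv
  rw [Finset.HasAntidiagonal.mem_antidiagonal] at huv
  rw [Finset.sum_filter, Finset.sum_mul]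
  apply Finset.sum_congr rfl
  intro j hj
  rw [Finset.Nat.mem_antidiagonalTuple] at hj
  have key : ∀ h, h ≤ K → (∑ i ∈ Finset.univ.filter (fun i : Fin (K+1) => (i : ℕ) < h),
      Fin.snoc j uv.2 i) = ∑ i ∈ Finset.univ.filter (fun i : Fin K => (i : ℕ) < h), j i := by
    intro h hh
    rw [Finset.sum_filter, Finset.sum_filter, Fin.sum_univ_castSucc]
    simp only [Fin.coe_castSucc, Fin.snoc_castSucc, Fin.val_last]
    rw [if_neg (by omega), add_zero]
  have hcond : (∀ h ≤ K + 1, h ≤ ∑ i ∈ Finset.univ.filter (fun i : Fin (K+1) => (i : ℕ) < h),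
      Fin.snoc j uv.2 i) ↔
      (∀ h ≤ K, h ≤ ∑ i ∈ Finset.univ.filter (fun i : Fin K => (i : ℕ) < h), j i) := by
    constructor
    · intro H h hh
      rw [← key h hh]
      exact H h (by omega)
    · intro H h hh
      rcases Nat.lt_or_ge h (K+1) with hlt | hge
      · rw [key h (by omega)]
        exact H h (by omega)
      · have hK1 : h = K + 1 := by omega
        subst hK1
        have : Finset.univ.filter (fun i : Fin (K+1) => (i : ℕ) < K + 1) = Finset.univ := by
          apply Finset.filter_true_of_mem
          intro i _; exact i.2
        rw [this, Fin.sum_univ_castSucc]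
        simp only [Fin.snoc_castSucc, Fin.snoc_last]
        rw [hj, huv]
        exact ht
  by_cases hc : ∀ h ≤ K, h ≤ ∑ i ∈ Finset.univ.filter (fun i : Fin K => (i : ℕ) < h), j i
  · rw [if_pos (hcond.2 hc), if_pos hc, Fin.prod_univ_castSucc]
    simp only [Fin.snoc_castSucc, Fin.snoc_last, Fin.coe_castSucc, Fin.val_last]
  · rw [if_neg (fun H => hc (hcond.1 H)), if_neg hc, zero_mul]


/-! ### Polynomial generating-function part -/

open Polynomial

lemma psum_succ (f : ℕ → ℕ) (K : ℕ) : psum f (K+1) = psum f K + f K := Finset.sum_range_succ f K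

lemma gfun_vanish (f : ℕ → ℕ) {K t : ℕ} (ht : psum f K + K < t) : gfun f K t = 0 := by
  unfold gfun
  apply Finset.sum_eq_zero
  intro m hm
  rw [Finset.mem_filter, Finset.Nat.mem_antidiagonalTuple] at hm
  have hex : ∃ i : Fin K, f i.val + 1 < m i := by
    by_contra hall
    push_neg at hall
    have h1 : t ≤ psum f K + K := by
      rw [← hm.1]
      calc ∑ i, m i ≤ ∑ i : Fin K, (f i.val + 1) := Finset.sum_le_sum (fun i _ => hall i)
        _ = psum f K + K := by
            rw [Finset.sum_add_distrib, psum, Finset.sum_range (fun i => f i)]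
            simp
    omega
  obtain ⟨i, hi⟩ := hex
  exact Finset.prod_eq_zero (Finset.mem_univ i) (Nat.choose_eq_zero_of_lt hi)

/-- the polynomial `P_K = ∑_t g_K(t) (-X)^t (1+X)^{p_K+K-t}` -/
def Pp (f : ℕ → ℕ) (K : ℕ) : Polynomial ℤ :=
  ∑ t ∈ Finset.range (psum f K + K + 1),
    Polynomial.C ((-1)^t * (gfun f K t : ℤ)) * ((1 + Polynomial.X)^(psum f K + K - t) * Polynomial.X^t)

lemma sum_range_antidiagonal {M : Type*} [AddCommMonoid M] (N : ℕ) (F : ℕ → ℕ → M) :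
    ∑ t ∈ Finset.range (N+1), ∑ uv ∈ Finset.HasAntidiagonal.antidiagonal t, F uv.1 uv.2 =
      ∑ u ∈ Finset.range (N+1), ∑ v ∈ Finset.range (N+1-u), F u v := by
  rw [Finset.sum_sigma', Finset.sum_sigma']
  refine Finset.sum_nbij' (fun x => ⟨x.2.1, x.2.2⟩) (fun y => ⟨y.1 + y.2, (y.1, y.2)⟩)
    ?_ ?_ ?_ ?_ ?_
  · rintro ⟨t, u, v⟩ hx
    simp only [Finset.mem_sigma, Finset.mem_range, Finset.HasAntidiagonal.mem_antidiagonal] at hx ⊢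
    omega
  · rintro ⟨u, v⟩ hy
    simp only [Finset.mem_sigma, Finset.mem_range, Finset.HasAntidiagonal.mem_antidiagonal] at hy ⊢
    refine ⟨by omega, trivial⟩
  · rintro ⟨t, u, v⟩ hx
    simp only [Finset.mem_sigma, Finset.mem_range, Finset.HasAntidiagonal.mem_antidiagonal] at hx
    simp [hx.2]
  · rintro ⟨u, v⟩ _
    rfl
  · rintro ⟨t, u, v⟩ _
    rfl

lemma Pp_succ (f : ℕ → ℕ) (K : ℕ) :
    Pp f (K+1) = Pp f K
      - Polynomial.C ((-1)^K * (lamf f K : ℤ)) *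
          ((1 + Polynomial.X)^(psum f (K+1) + 1) * Polynomial.X^K) := by
  have hps : psum f (K+1) = psum f K + f K := psum_succ f K
  set p := psum f K with hp
  set q := f K with hq
  set N := p + q + (K + 1) with hN
  set c : ℕ → ℕ := fun t => ∑ uv ∈ Finset.HasAntidiagonal.antidiagonal t, gfun f K uv.1 * (q + 1).choose uv.2
    with hc
  have hcbig : ∀ t, K + 1 ≤ t → c t = gfun f (K+1) t := fun t ht => (gfun_succ f K t ht).symm
  have hcK : c K = lamf f K := by
    rw [hc]
    simp only
    rw [Finset.Nat.sum_antidiagonal_eq_sum_range_succ_mk, Finset.sum_range_succ]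
    rw [Finset.sum_eq_zero, zero_add, Nat.sub_self, gfun_self, Nat.choose_zero_right, mul_one]
    intro i hi
    rw [Finset.mem_range] at hi
    rw [gfun_eq_zero_of_lt hi, zero_mul]
  have hcsmall : ∀ t, t < K → c t = 0 := by
    intro t ht
    rw [hc]
    simp only
    apply Finset.sum_eq_zero
    rintro ⟨u, v⟩ huv
    rw [Finset.HasAntidiagonal.mem_antidiagonal] at huv
    rw [gfun_eq_zero_of_lt (show (u,v).1 < K by omega), zero_mul]
  have claim1 : ∑ t ∈ Finset.range (N + 1),
      Polynomial.C ((-1)^t * (c t : ℤ)) * ((1 + Polynomial.X)^(N - t) * Polynomial.X^t)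
      = Pp f (K+1) + Polynomial.C ((-1)^K * (lamf f K : ℤ)) *
          ((1 + Polynomial.X)^(psum f (K+1) + 1) * Polynomial.X^K) := by
    have hNe : psum f (K+1) + (K+1) = N := by omega
    have hterm : ∀ t ∈ Finset.range (N+1),
        Polynomial.C ((-1)^t * (c t : ℤ)) * ((1 + Polynomial.X)^(N - t) * Polynomial.X^t)
        = Polynomial.C ((-1)^t * (gfun f (K+1) t : ℤ)) *
            ((1 + Polynomial.X)^(N - t) * Polynomial.X^t)
          + (if t = K then Polynomial.C ((-1)^K * (lamf f K : ℤ)) *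
              ((1 + Polynomial.X)^(psum f (K+1) + 1) * Polynomial.X^K) else 0) := by
      intro t _
      rcases lt_trichotomy t K with h | h | h
      · rw [hcsmall t h, if_neg (by omega), gfun_eq_zero_of_lt (by omega)]
        simp
      · subst h
        rw [hcK, gfun_eq_zero_of_lt (by omega), if_pos rfl]
        have he : N - t = psum f (t+1) + 1 := by omega
        rw [he]
        simp
      · rw [hcbig t (by omega), if_neg (by omega), add_zero]
    rw [Finset.sum_congr rfl hterm, Finset.sum_add_distrib,
      Finset.sum_ite_eq' (Finset.range (N+1)) K, if_pos (by rw [Finset.mem_range]; omega)]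
    congr 1
    rw [Pp, hNe]
  have claim2 : ∑ t ∈ Finset.range (N + 1),
      Polynomial.C ((-1)^t * (c t : ℤ)) * ((1 + Polynomial.X)^(N - t) * Polynomial.X^t)
      = Pp f K := by
    have expand : ∀ t ∈ Finset.range (N+1),
        Polynomial.C ((-1)^t * (c t : ℤ)) * ((1 + Polynomial.X)^(N - t) * Polynomial.X^t)
        = ∑ uv ∈ Finset.HasAntidiagonal.antidiagonal t,
            Polynomial.C ((-1)^(uv.1+uv.2) * ((gfun f K uv.1 : ℤ) * ((q+1).choose uv.2 : ℤ))) *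
              ((1 + Polynomial.X)^(N - (uv.1+uv.2)) * Polynomial.X^(uv.1+uv.2)) := by
      intro t _
      rw [hc]
      simp only
      push_cast
      rw [Polynomial.C_mul, map_sum, Finset.mul_sum, Finset.sum_mul]
      apply Finset.sum_congr rfl
      rintro ⟨u, v⟩ huv
      rw [Finset.HasAntidiagonal.mem_antidiagonal] at huv
      simp only at huv ⊢
      rw [huv]
      simp only [Polynomial.C_mul]
      try ring
    rw [Finset.sum_congr rfl expand]
    rw [sum_range_antidiagonal N (fun u v =>
      Polynomial.C ((-1)^(u+v) * ((gfun f K u : ℤ) * ((q+1).choose v : ℤ))) *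
        ((1 + Polynomial.X)^(N - (u+v)) * Polynomial.X^(u+v)))]
    rw [Pp]
    rw [← Finset.sum_subset (Finset.range_subset_range.2 (show p + K + 1 ≤ N + 1 by omega))
      (by
        intro u _ hu
        rw [Finset.mem_range] at hu
        apply Finset.sum_eq_zero
        intro v _
        rw [gfun_vanish (f := f) (show psum f K + K < u by omega)]
        simp)]
    apply Finset.sum_congr rfl
    intro u hu
    rw [Finset.mem_range] at hu
    have hBsum : ∑ v ∈ Finset.range (q + 2),
        Polynomial.C ((-1)^v * (((q+1).choose v : ℕ) : ℤ)) *
          ((1 + Polynomial.X)^(q + 1 - v) * Polynomial.X^v) = 1 := by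
      have h2 : ∑ v ∈ Finset.range (q + 2),
          Polynomial.C ((-1)^v * (((q+1).choose v : ℕ) : ℤ)) *
            ((1 + Polynomial.X)^(q + 1 - v) * Polynomial.X^v)
          = ∑ v ∈ Finset.range (q+1+1), (-Polynomial.X)^v * (1 + Polynomial.X)^(q+1-v) *
              (((q+1).choose v : ℕ) : Polynomial ℤ) := by
        apply Finset.sum_congr rfl
        intro v _
        simp only [Polynomial.C_mul, Polynomial.C_pow, Polynomial.C_neg, Polynomial.C_1,
          Polynomial.C_eq_natCast]
        ring
      rw [h2, ← add_pow]
      rw [show (-Polynomial.X + (1 + Polynomial.X) : Polynomial ℤ) = 1 by ring, one_pow]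
    rw [← Finset.sum_subset (Finset.range_subset_range.2 (show q + 2 ≤ N + 1 - u by omega))
      (by
        intro v _ hv
        rw [Finset.mem_range] at hv
        rw [Nat.choose_eq_zero_of_lt (show q + 1 < v by omega)]
        simp)]
    calc ∑ v ∈ Finset.range (q+2),
          Polynomial.C ((-1)^(u+v) * ((gfun f K u : ℤ) * ((q+1).choose v : ℤ))) *
            ((1 + Polynomial.X)^(N - (u+v)) * Polynomial.X^(u+v))
        = (Polynomial.C ((-1)^u * (gfun f K u : ℤ)) *
            ((1 + Polynomial.X)^(p + K - u) * Polynomial.X^u)) *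
          ∑ v ∈ Finset.range (q + 2),
            Polynomial.C ((-1)^v * (((q+1).choose v : ℕ) : ℤ)) *
              ((1 + Polynomial.X)^(q + 1 - v) * Polynomial.X^v) := by
          rw [Finset.mul_sum]
          apply Finset.sum_congr rfl
          intro v hv
          rw [Finset.mem_range] at hv
          have he : N - (u+v) = (p + K - u) + (q + 1 - v) := by omega
          rw [he, pow_add (1 + Polynomial.X), show u + v = u + v from rfl]
          simp only [Polynomial.C_mul, Polynomial.C_pow, Polynomial.C_neg, Polynomial.C_1,
            Polynomial.C_eq_natCast, pow_add]
          ring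
      _ = _ := by rw [hBsum, mul_one]
  rw [← claim2, claim1]
  ring

lemma Pp_main (f : ℕ → ℕ) (K : ℕ) :
    Pp f K + ∑ s ∈ Finset.range K,
      Polynomial.C ((-1)^s * (lamf f s : ℤ)) *
        ((1 + Polynomial.X)^(psum f (s+1) + 1) * Polynomial.X^s) = 1 := by
  induction K with
  | zero =>
      rw [Finset.range_zero, Finset.sum_empty, add_zero, Pp]
      have h0 : psum f 0 = 0 := by simp [psum]
      rw [h0, Finset.sum_range_one, gfun_zero]
      simp
  | succ K ih =>
      rw [Pp_succ, Finset.sum_range_succ]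
      linear_combination ih

lemma key_identity (f : ℕ → ℕ) (K : ℕ) (hK : 1 ≤ K) :
    (-1:ℤ)^K * (lamf f K : ℤ) + ∑ s ∈ Finset.range K,
      (-1:ℤ)^s * (lamf f s : ℤ) * (((psum f (s+1) + 1).choose (K - s) : ℕ) : ℤ) = 0 := by
  have h := congrArg (fun P => Polynomial.coeff P K) (Pp_main f K)
  simp only [Polynomial.coeff_add, Polynomial.finset_sum_coeff] at h
  have hco : ∀ (c : ℤ) (e t : ℕ),
      (Polynomial.C c * ((1 + Polynomial.X)^e * Polynomial.X^t)).coeff K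
      = if t ≤ K then c * (e.choose (K - t) : ℤ) else 0 := by
    intro c e t
    rw [← mul_assoc, Polynomial.coeff_mul_X_pow']
    split_ifs with hK'
    · rw [Polynomial.coeff_C_mul, Polynomial.coeff_one_add_X_pow]
    · rfl
  rw [Finset.sum_congr rfl (fun s hs => hco _ _ s)] at h
  rw [Pp, Polynomial.finset_sum_coeff] at h
  rw [Finset.sum_congr rfl (fun t ht => hco _ _ t)] at h
  have h1 : ∑ t ∈ Finset.range (psum f K + K + 1),
      (if t ≤ K then ((-1:ℤ)^t * (gfun f K t : ℤ)) * ((psum f K + K - t).choose (K - t) : ℤ) else 0)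
      = (-1:ℤ)^K * (lamf f K : ℤ) := by
    rw [Finset.sum_eq_single K]
    · rw [if_pos le_rfl, Nat.sub_self, Nat.choose_zero_right, gfun_self]
      push_cast
      ring
    · intro t _ hne
      rcases Nat.lt_or_ge t K with hlt | hge
      · rw [if_pos hlt.le, gfun_eq_zero_of_lt hlt]
        push_cast
        ring
      · rw [if_neg (by omega)]
    · intro habs
      exact absurd (Finset.mem_range.2 (by omega)) habs
  rw [h1] at h
  have h2 : ∀ s ∈ Finset.range K,
      (if s ≤ K then ((-1:ℤ)^s * (lamf f s : ℤ)) * ((psum f (s+1) + 1).choose (K - s) : ℤ) else 0)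
      = (-1:ℤ)^s * (lamf f s : ℤ) * (((psum f (s+1) + 1).choose (K - s) : ℕ) : ℤ) := by
    intro s hs
    rw [Finset.mem_range] at hs
    rw [if_pos hs.le]
  rw [Finset.sum_congr rfl h2] at h
  rw [Polynomial.coeff_one, if_neg (by omega)] at h
  exact h


/-! ### Algebra part: words, compositions -/

lemma a_zero : a 0 = 1 := by simp [a]

/-- word of a list -/
def W (L : List ℕ) : Hd := (L.map a).prod

lemma W_append (L₁ L₂ : List ℕ) : W (L₁ ++ L₂) = W L₁ * W L₂ := by
  simp [W]

/-- word of a tuple -/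
def wordT {k : ℕ} (j : Fin k → ℕ) : Hd := (List.ofFn fun i => a (j i)).prod

lemma W_ofFn {k : ℕ} (j : Fin k → ℕ) : W (List.ofFn j) = wordT j := by
  rw [W, wordT, List.map_ofFn]
  rfl

lemma wordT_snoc {k : ℕ} (j : Fin k → ℕ) (v : ℕ) :
    wordT (Fin.snoc j v) = wordT j * a v := by
  rw [wordT, wordT, List.ofFn_succ']
  simp only [Fin.snoc_castSucc, Fin.snoc_last]
  rw [List.concat_eq_append, List.prod_append, List.prod_cons, List.prod_nil, mul_one]

/-- compositions of `n` with `l` parts, as lists -/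
def cset (l n : ℕ) : Finset (List ℕ) :=
  ((Finset.Nat.antidiagonalTuple l n).filter (fun j => ∀ i, 0 < j i)).image List.ofFn

lemma sum_cset {M : Type*} [AddCommMonoid M] (l n : ℕ) (F : List ℕ → M) :
    ∑ L ∈ cset l n, F L =
      ∑ j ∈ (Finset.Nat.antidiagonalTuple l n).filter (fun j => ∀ i, 0 < j i),
        F (List.ofFn j) :=
  Finset.sum_image (fun x _ y _ h => List.ofFn_injective h)

lemma mem_cset {l n : ℕ} {L : List ℕ} :
    L ∈ cset l n ↔ L.length = l ∧ L.sum = n ∧ ∀ x ∈ L, 0 < x := by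
  constructor
  · intro hL
    rw [cset, Finset.mem_image] at hL
    obtain ⟨j, hj, rfl⟩ := hL
    rw [Finset.mem_filter, Finset.Nat.mem_antidiagonalTuple] at hj
    refine ⟨List.length_ofFn, ?_, ?_⟩
    · rw [List.sum_ofFn, hj.1]
    · intro x hx
      rw [List.mem_ofFn] at hx
      obtain ⟨i, rfl⟩ := hx
      exact hj.2 i
  · rintro ⟨hlen, hsum, hpos⟩
    subst hlen
    rw [cset, Finset.mem_image]
    refine ⟨fun i => L.get i, ?_, List.ofFn_get L⟩
    rw [Finset.mem_filter, Finset.Nat.mem_antidiagonalTuple]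
    constructor
    · rw [← hsum]
      rw [← List.sum_ofFn (f := fun i => L.get i), List.ofFn_get]
    · intro i
      exact hpos _ (List.get_mem L i)

lemma length_le_sum_of_pos : ∀ (L : List ℕ), (∀ x ∈ L, 0 < x) → L.length ≤ L.sum := by
  intro L
  induction L with
  | nil => simp
  | cons x xs ih =>
      intro h
      rw [List.length_cons, List.sum_cons]
      have h1 := h x List.mem_cons_self
      have h2 := ih (fun y hy => h y (List.mem_cons_of_mem x hy))
      omega

lemma cset_le {l n : ℕ} {L : List ℕ} (h : L ∈ cset l n) : l ≤ n := by
  rw [mem_cset] at h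
  obtain ⟨h1, h2, h3⟩ := h
  rw [← h1, ← h2]
  exact length_le_sum_of_pos L h3

lemma cset_empty {l n : ℕ} (h : n < l) : cset l n = ∅ := by
  rw [Finset.eq_empty_iff_forall_notMem]
  intro L hL
  exact absurd (cset_le hL) (by omega)

lemma cset_one {v : ℕ} (hv : 0 < v) : cset 1 v = {[v]} := by
  ext L
  rw [mem_cset, Finset.mem_singleton]
  constructor
  · rintro ⟨h1, h2, _⟩
    match L, h1 with
    | [x], _ =>
      rw [List.sum_cons, List.sum_nil, add_zero] at h2
      rw [h2]
  · rintro rfl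
    exact ⟨rfl, by simp, by simpa using hv⟩

lemma lam_zero (nv : Fin 0 → ℕ) : lam 0 nv = 1 := by
  rw [lam, Mset]
  rw [Finset.Nat.antidiagonalTuple_zero_zero]
  simp

/-- the sum of words over positive tuples -/
def PwT (r m : ℕ) : Hd :=
  ∑ j ∈ (Finset.Nat.antidiagonalTuple r m).filter (fun j => ∀ i, 0 < j i), wordT j

lemma PwT_eq (r m : ℕ) : PwT r m = ∑ L ∈ cset r m, W L := by
  rw [sum_cset, PwT]
  apply Finset.sum_congr rfl
  intro j _
  exact (W_ofFn j).symm

lemma PwT_vanish {r m : ℕ} (h : m < r) : PwT r m = 0 := by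
  rw [PwT_eq, cset_empty h, Finset.sum_empty]

lemma PwT_zero (m : ℕ) : PwT 0 m = if m = 0 then 1 else 0 := by
  rw [PwT]
  rcases m with _ | m
  · rw [Finset.Nat.antidiagonalTuple_zero_zero]
    simp [wordT]
  · rw [Finset.Nat.antidiagonalTuple_zero_succ]
    simp

lemma Q_succ (k m : ℕ) : Q (k+1) m = ∑ uv ∈ Finset.HasAntidiagonal.antidiagonal m, Q k uv.1 * a uv.2 := by
  rw [Q, sum_antidiagonalTuple_succ k m (fun j => (List.ofFn fun i => a (j i)).prod)]
  apply Finset.sum_congr rfl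
  intro uv _
  rw [Q, Finset.sum_mul]
  apply Finset.sum_congr rfl
  intro j _
  exact wordT_snoc j uv.2

lemma PwT_succ (r m : ℕ) :
    PwT (r+1) m = ∑ uv ∈ Finset.HasAntidiagonal.antidiagonal m,
      (if 0 < uv.2 then PwT r uv.1 * a uv.2 else 0) := by
  rw [PwT, Finset.sum_filter,
    sum_antidiagonalTuple_succ r m
      (fun j => if (∀ i, 0 < j i) then wordT j else 0)]
  apply Finset.sum_congr rfl
  intro uv _
  rw [PwT, Finset.sum_filter]
  by_cases hv : 0 < uv.2
  · rw [if_pos hv, Finset.sum_mul]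
    apply Finset.sum_congr rfl
    intro j _
    have hiff : (∀ i : Fin (r+1), 0 < Fin.snoc (α := fun _ => ℕ) j uv.2 i) ↔ (∀ i : Fin r, 0 < j i) := by
      constructor
      · intro H i
        have := H i.castSucc
        rwa [Fin.snoc_castSucc] at this
      · intro H i
        refine Fin.lastCases ?_ ?_ i
        · rw [Fin.snoc_last]
          exact hv
        · intro i'
          rw [Fin.snoc_castSucc]
          exact H i'
    by_cases hj : ∀ i : Fin r, 0 < j i
    · rw [if_pos (hiff.2 hj), if_pos hj, wordT_snoc]
    · rw [if_neg (fun H => hj (hiff.1 H)), if_neg hj, zero_mul]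
  · rw [if_neg hv]
    apply Finset.sum_eq_zero
    intro j _
    rw [if_neg]
    intro H
    exact hv (by simpa [Fin.snoc_last] using H (Fin.last r))

lemma Q_expand (k : ℕ) : ∀ m : ℕ, Q k m = ∑ r ∈ Finset.range (m+1), (k.choose r : Hd) * PwT r m := by
  induction k with
  | zero =>
      intro m
      have hQ : Q 0 m = if m = 0 then 1 else 0 := by
        rcases m with _ | m
        · rw [Q, Finset.Nat.antidiagonalTuple_zero_zero, Finset.sum_singleton, if_pos rfl]
          rfl
        · rw [Q, Finset.Nat.antidiagonalTuple_zero_succ, Finset.sum_empty,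
            if_neg (Nat.succ_ne_zero m)]
      rw [hQ]
      rcases m with _ | m
      · rw [Finset.sum_range_one, PwT_zero]
        simp
      · rw [if_neg (Nat.succ_ne_zero m)]
        symm
        apply Finset.sum_eq_zero
        intro r _
        rcases Nat.eq_zero_or_pos r with rfl | hrpos
        · rw [PwT_zero, if_neg (Nat.succ_ne_zero m), mul_zero]
        · rw [Nat.choose_eq_zero_of_lt hrpos, Nat.cast_zero, zero_mul]
  | succ k ih =>
      intro m
      rw [Q_succ]
      -- split off the (m, 0) term
      have hmem : ((m, 0) : ℕ × ℕ) ∈ Finset.HasAntidiagonal.antidiagonal m := by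
        rw [Finset.HasAntidiagonal.mem_antidiagonal]
        simp
      rw [← Finset.add_sum_erase _ _ hmem]
      have hv0 : a (0 : ℕ) = 1 := a_zero
      rw [hv0, mul_one]
      have hrest : ∑ uv ∈ (Finset.HasAntidiagonal.antidiagonal m).erase (m, 0), Q k uv.1 * a uv.2
          = ∑ r ∈ Finset.range (m+1), (k.choose r : Hd) * PwT (r+1) m := by
        have hstep : ∀ uv ∈ (Finset.HasAntidiagonal.antidiagonal m).erase (m, 0),
            Q k uv.1 * a uv.2
            = ∑ r ∈ Finset.range (m+1), (k.choose r : Hd) * (PwT r uv.1 * a uv.2) := by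
          intro uv huv
          rw [Finset.mem_erase, Finset.HasAntidiagonal.mem_antidiagonal] at huv
          rw [ih uv.1, Finset.sum_mul]
          rw [← Finset.sum_subset (Finset.range_subset_range.2 (show uv.1 + 1 ≤ m + 1 by omega))]
          · apply Finset.sum_congr rfl
            intro r _
            rw [mul_assoc]
          · intro r hr hr2
            rw [Finset.mem_range] at hr hr2
            rw [PwT_vanish (show uv.1 < r by omega), zero_mul, mul_zero]
        rw [Finset.sum_congr rfl hstep, Finset.sum_comm]
        apply Finset.sum_congr rfl
        intro r _
        rw [← Finset.mul_sum]
        congr 1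
        rw [PwT_succ]
        rw [← Finset.add_sum_erase _ _ hmem, if_neg (by omega), zero_add]
        apply Finset.sum_congr rfl
        intro uv huv
        rw [Finset.mem_erase, Finset.HasAntidiagonal.mem_antidiagonal] at huv
        rw [if_pos]
        rcases Nat.eq_zero_or_pos uv.2 with h0 | h; swap
        · exact h
        · exfalso
          apply huv.1
          have : uv.1 = m := by omega
          rw [Prod.ext_iff]
          exact ⟨this, h0⟩
      rw [hrest, ih m]
      -- now combine ∑ C(k,r) PwT r + ∑ C(k,r) PwT (r+1) = ∑ C(k+1,r) PwT r
      rw [Finset.sum_range_succ' (fun r => ((k+1).choose r : Hd) * PwT r m) m]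
      rw [Finset.sum_range_succ' (fun r => (k.choose r : Hd) * PwT r m) m]
      rw [Finset.sum_range_succ (fun r => (k.choose r : Hd) * PwT (r+1) m) m]
      rw [PwT_vanish (show m < m + 1 by omega), mul_zero, add_zero]
      rw [Nat.choose_zero_right, Nat.choose_zero_right]
      rw [add_right_comm]
      congr 1
      rw [← Finset.sum_add_distrib]
      apply Finset.sum_congr rfl
      intro i _
      rw [Nat.choose_succ_succ k i, Nat.cast_add, add_mul, add_comm]


/-! ### Final assembly -/

/-- `lam` of a list -/
def lamL (L : List ℕ) : ℕ := lamf (fun i => L.getD i 0) L.length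

lemma list_sum_take (L : List ℕ) : ∀ s, s ≤ L.length →
    (L.take s).sum = psum (fun i => L.getD i 0) s := by
  intro s
  induction s with
  | zero => intro _; simp [psum]
  | succ s ih =>
      intro hs
      rw [List.sum_take_succ L s (by omega), psum_succ, ih (by omega)]
      congr 1
      rw [List.getD_eq_getElem L 0 (by omega)]

lemma lamL_take (L : List ℕ) (s : ℕ) (hs : s ≤ L.length) :
    lamL (L.take s) = lamf (fun i => L.getD i 0) s := by
  have hl : (L.take s).length = s := by rw [List.length_take]; omega
  rw [lamL, hl]
  apply lamf_congr
  intro i hi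
  rw [List.getD_eq_getElem _ 0 (by rw [hl]; omega), List.getD_eq_getElem L 0 (by omega)]
  exact List.getElem_take

/-- the scalar identity in the form needed for the collapse -/
lemma key_identity_Icc (L : List ℕ) (K : ℕ) (hK : 1 ≤ K) (hlen : L.length = K + 1) :
    ∑ s ∈ Finset.Icc 1 K, (-1:ℤ)^(s-1) * (lamL (L.take (s-1)) : ℤ) *
        ((((L.take s).sum + 1).choose (K+1-s) : ℕ) : ℤ)
      = -((-1:ℤ)^K * (lamL (L.take K) : ℤ)) := by
  set f : ℕ → ℕ := fun i => L.getD i 0 with hf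
  have h1 : ∀ s ∈ Finset.Icc 1 K, (-1:ℤ)^(s-1) * (lamL (L.take (s-1)) : ℤ) *
      ((((L.take s).sum + 1).choose (K+1-s) : ℕ) : ℤ)
      = (-1:ℤ)^(s-1) * (lamf f (s-1) : ℤ) * (((psum f s + 1).choose (K+1-s) : ℕ) : ℤ) := by
    intro s hs
    rw [Finset.mem_Icc] at hs
    rw [lamL_take L (s-1) (by omega), list_sum_take L s (by omega)]
  rw [Finset.sum_congr rfl h1]
  rw [← Finset.Ico_add_one_right_eq_Icc, Finset.sum_Ico_eq_sum_range]
  have h2 : ∀ i ∈ Finset.range (K + 1 - 1), (-1:ℤ)^(1+i-1) * (lamf f (1+i-1) : ℤ) *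
      (((psum f (1+i) + 1).choose (K+1-(1+i)) : ℕ) : ℤ)
      = (-1:ℤ)^i * (lamf f i : ℤ) * (((psum f (i+1) + 1).choose (K-i) : ℕ) : ℤ) := by
    intro i _
    have e1 : 1 + i - 1 = i := by omega
    have e2 : K + 1 - (1 + i) = K - i := by omega
    have e3 : 1 + i = i + 1 := by omega
    rw [e1, e2, e3]
  rw [Finset.sum_congr rfl h2]
  have e4 : K + 1 - 1 = K := by omega
  rw [e4]
  have h := key_identity f K hK
  rw [lamL_take L K (by omega)]
  linarith [h]

lemma cast_collapse (K : ℕ) (L : List ℕ) (hK : 1 ≤ K) (hlen : L.length = K + 1) :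
    ∑ s ∈ Finset.Icc 1 K, (-1:Hd)^(s-1) * ((lamL (L.take (s-1)) : Hd) *
        (((((L.take s).sum + 1).choose (K+1-s) : ℕ) : Hd) * W L))
      = -((-1:Hd)^K * ((lamL (L.take K) : Hd) * W L)) := by
  have h1 : ∀ s ∈ Finset.Icc 1 K, (-1:Hd)^(s-1) * ((lamL (L.take (s-1)) : Hd) *
      (((((L.take s).sum + 1).choose (K+1-s) : ℕ) : Hd) * W L))
      = ((((-1:ℤ)^(s-1) * (lamL (L.take (s-1)) : ℤ) *
          ((((L.take s).sum + 1).choose (K+1-s) : ℕ) : ℤ)) : ℤ) : Hd) * W L := by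
    intro s _
    push_cast
    rw [mul_assoc, mul_assoc]
  rw [Finset.sum_congr rfl h1, ← Finset.sum_mul, ← Int.cast_sum,
    key_identity_Icc L K hK hlen]
  push_cast
  rw [neg_mul, mul_assoc]

/-- uniform range form of the explicit formula -/
lemma RHS_uniform (p : ℕ) (hp : 1 ≤ p) :
    -(a p) - ∑ K ∈ Finset.Icc 1 (p - 1), (-1 : Hd) ^ K *
        ∑ L ∈ cset (K+1) p, (lamL (L.take K) : Hd) * W L
      = -∑ K ∈ Finset.range p, (-1 : Hd) ^ K *
        ∑ L ∈ cset (K+1) p, (lamL (L.take K) : Hd) * W L := by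
  have h1 : Finset.range p = insert 0 (Finset.Icc 1 (p-1)) := by
    ext x
    simp only [Finset.mem_range, Finset.mem_insert, Finset.mem_Icc]
    omega
  rw [h1, Finset.sum_insert (by simp)]
  have h0 : (-1:Hd)^0 * ∑ L ∈ cset 1 p, (lamL (L.take 0) : Hd) * W L = a p := by
    rw [cset_one hp, Finset.sum_singleton]
    have : lamL (([p] : List ℕ).take 0) = 1 := by
      rw [List.take_zero, lamL, lamf]
      exact lam_zero _
    rw [this, pow_zero, one_mul, Nat.cast_one, one_mul, W]
    simp
  rw [h0]
  rw [neg_add, sub_eq_add_neg]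

lemma prod_expand (p m : ℕ) :
    (∑ k ∈ Finset.range p, (-1:Hd)^k * ∑ L₁ ∈ cset (k+1) p, (lamL (L₁.take k) : Hd) * W L₁) *
      Q (p+1) m
    = ∑ k ∈ Finset.range p, ∑ r ∈ Finset.range (m+1),
        ∑ L₁ ∈ cset (k+1) p, ∑ L₂ ∈ cset r m,
        (-1:Hd)^k * ((lamL (L₁.take k) : Hd) * ((((p+1).choose r : ℕ) : Hd) * (W L₁ * W L₂))) := by
  rw [Q_expand (p+1) m, Finset.sum_mul_sum]
  apply Finset.sum_congr rfl
  intro k _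
  apply Finset.sum_congr rfl
  intro r _
  rw [PwT_eq, Finset.mul_sum, Finset.mul_sum, Finset.sum_mul_sum]
  apply Finset.sum_congr rfl
  intro L₁ _
  apply Finset.sum_congr rfl
  intro L₂ _
  rw [mul_assoc, mul_assoc, ← mul_assoc (W L₁) ((((p+1).choose r : ℕ) : Hd)) (W L₂),
    ← (Nat.cast_commute ((p+1).choose r) (W L₁)).eq, mul_assoc]

/-- the master reindexing -/
lemma master (n : ℕ) :
    ∑ p ∈ Finset.Icc 1 (n-1), ∑ k ∈ Finset.range p, ∑ r ∈ Finset.range (n-p+1),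
      ∑ L₁ ∈ cset (k+1) p, ∑ L₂ ∈ cset r (n-p),
        (-1:Hd)^k * ((lamL (L₁.take k) : Hd) * ((((p+1).choose r : ℕ) : Hd) * (W L₁ * W L₂)))
    = ∑ K ∈ Finset.Icc 1 (n-1), ∑ L ∈ cset (K+1) n, ∑ s ∈ Finset.Icc 1 K,
        (-1:Hd)^(s-1) * ((lamL (L.take (s-1)) : Hd) *
          (((((L.take s).sum + 1).choose (K+1-s) : ℕ) : Hd) * W L)) := by
  rw [Finset.sum_sigma', Finset.sum_sigma', Finset.sum_sigma', Finset.sum_sigma',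
    Finset.sum_sigma', Finset.sum_sigma']
  refine Finset.sum_nbij'
    (fun x => ⟨⟨x.1.1.1.2 + x.1.1.2, x.1.2 ++ x.2⟩, x.1.1.1.2 + 1⟩)
    (fun y => ⟨⟨⟨⟨(y.1.2.take y.2).sum, y.2 - 1⟩, y.1.1 + 1 - y.2⟩, y.1.2.take y.2⟩,
      y.1.2.drop y.2⟩)
    ?_ ?_ ?_ ?_ ?_
  · rintro ⟨⟨⟨⟨p, k⟩, r⟩, L₁⟩, L₂⟩ hx
    simp only [Finset.mem_sigma, Finset.mem_Icc, Finset.mem_range] at hx ⊢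
    obtain ⟨⟨⟨⟨hp, hk⟩, hr⟩, hL₁⟩, hL₂⟩ := hx
    rw [mem_cset] at hL₁ hL₂
    obtain ⟨hlen₁, hsum₁, hpos₁⟩ := hL₁
    obtain ⟨hlen₂, hsum₂, hpos₂⟩ := hL₂
    have hr1 : 1 ≤ r := by
      rcases Nat.eq_zero_or_pos r with rfl | h
      · exfalso
        have : L₂ = [] := List.length_eq_zero_iff.1 hlen₂
        rw [this] at hsum₂
        simp at hsum₂
        omega
      · exact h
    have hls : L₁.length + L₂.length ≤ L₁.sum + L₂.sum := by
      have := length_le_sum_of_pos L₁ hpos₁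
      have := length_le_sum_of_pos L₂ hpos₂
      omega
    refine ⟨⟨⟨by omega, by omega⟩, ?_⟩, by omega⟩
    rw [mem_cset]
    refine ⟨by rw [List.length_append]; omega, by rw [List.sum_append]; omega, ?_⟩
    intro x hx
    rw [List.mem_append] at hx
    rcases hx with h | h
    · exact hpos₁ x h
    · exact hpos₂ x h
  · rintro ⟨⟨K, L⟩, s'⟩ hy
    simp only [Finset.mem_sigma, Finset.mem_Icc, Finset.mem_range] at hy ⊢
    obtain ⟨⟨hK, hL⟩, hs⟩ := hy
    rw [mem_cset] at hL
    obtain ⟨hlen, hsum, hpos⟩ := hL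
    have htlen : (L.take s').length = s' := by rw [List.length_take]; omega
    have hdlen : (L.drop s').length = K + 1 - s' := by rw [List.length_drop]; omega
    have htsum : (L.take s').sum + (L.drop s').sum = n := by
      rw [← List.sum_append, List.take_append_drop, hsum]
    have htpos : ∀ x ∈ L.take s', 0 < x := fun x hx => hpos x (List.mem_of_mem_take hx)
    have hdpos : ∀ x ∈ L.drop s', 0 < x := fun x hx => hpos x (List.mem_of_mem_drop hx)
    have hts : s' ≤ (L.take s').sum := by
      have := length_le_sum_of_pos _ htpos
      omega
    have hds : K + 1 - s' ≤ (L.drop s').sum := by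
      have := length_le_sum_of_pos _ hdpos
      omega
    refine ⟨⟨⟨⟨by omega, by omega⟩, by omega⟩, ?_⟩, ?_⟩
    · rw [mem_cset]
      exact ⟨by omega, rfl, htpos⟩
    · rw [mem_cset]
      exact ⟨by omega, by omega, hdpos⟩
  · rintro ⟨⟨⟨⟨p, k⟩, r⟩, L₁⟩, L₂⟩ hx
    simp only [Finset.mem_sigma, Finset.mem_Icc, Finset.mem_range] at hx
    obtain ⟨⟨⟨⟨hp, hk⟩, hr⟩, hL₁⟩, hL₂⟩ := hx
    rw [mem_cset] at hL₁ hL₂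
    have htake : (L₁ ++ L₂).take (k + 1) = L₁ := List.take_left' hL₁.1
    have hdrop : (L₁ ++ L₂).drop (k + 1) = L₂ := List.drop_left' hL₁.1
    have e1 : ((L₁ ++ L₂).take (k+1)).sum = p := by rw [htake, hL₁.2.1]
    have e2 : k + 1 - 1 = k := by omega
    have e3 : k + r + 1 - (k + 1) = r := by omega
    simp only [e2, e3, htake, hdrop, hL₁.2.1]
  · rintro ⟨⟨K, L⟩, s'⟩ hy
    simp only [Finset.mem_sigma, Finset.mem_Icc, Finset.mem_range] at hy
    obtain ⟨⟨hK, hL⟩, hs⟩ := hy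
    have e1 : s' - 1 + (K + 1 - s') = K := by omega
    have e2 : L.take s' ++ L.drop s' = L := List.take_append_drop s' L
    have e3 : s' - 1 + 1 = s' := by omega
    simp only [e1, e2, e3]
  · rintro ⟨⟨⟨⟨p, k⟩, r⟩, L₁⟩, L₂⟩ hx
    simp only [Finset.mem_sigma, Finset.mem_Icc, Finset.mem_range] at hx
    obtain ⟨⟨⟨⟨hp, hk⟩, hr⟩, hL₁⟩, hL₂⟩ := hx
    rw [mem_cset] at hL₁
    simp only
    rw [show k + 1 - 1 = k by omega, show k + r + 1 - (k + 1) = r by omega,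
      List.take_left' hL₁.1, hL₁.2.1,
      List.take_append_of_le_length (by rw [hL₁.1]; omega),
      W_append]

/-- `Sgen` in cset form -/
theorem main_cset : ∀ (n : ℕ), 1 ≤ n →
    Sgen n = -(a n) - ∑ K ∈ Finset.Icc 1 (n-1), (-1:Hd)^K *
      ∑ L ∈ cset (K+1) n, (lamL (L.take K) : Hd) * W L := by
  intro n
  induction n using Nat.strong_induction_on with
  | _ n IH =>
  intro hn
  rw [Sgen]
  rw [Finset.sum_attach (Finset.Icc 1 (n-1)) (fun p => Sgen p * Q (p + 1) (n - p))]
  have hS : ∀ p ∈ Finset.Icc 1 (n-1), Sgen p * Q (p+1) (n-p)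
      = -(∑ k ∈ Finset.range p, ∑ r ∈ Finset.range ((n-p)+1), ∑ L₁ ∈ cset (k+1) p,
          ∑ L₂ ∈ cset r (n-p),
          (-1:Hd)^k * ((lamL (L₁.take k) : Hd) *
            ((((p+1).choose r : ℕ) : Hd) * (W L₁ * W L₂)))) := by
    intro p hp
    rw [Finset.mem_Icc] at hp
    rw [IH p (by omega) (by omega), RHS_uniform p (by omega), neg_mul, prod_expand p (n-p)]
  rw [Finset.sum_congr rfl hS]
  have hRHS : ∑ K ∈ Finset.Icc 1 (n-1), (-1:Hd)^K *
      ∑ L ∈ cset (K+1) n, (lamL (L.take K) : Hd) * W L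
      = -∑ K ∈ Finset.Icc 1 (n-1), ∑ L ∈ cset (K+1) n, ∑ s ∈ Finset.Icc 1 K,
        (-1:Hd)^(s-1) * ((lamL (L.take (s-1)) : Hd) *
          (((((L.take s).sum + 1).choose (K+1-s) : ℕ) : Hd) * W L)) := by
    rw [← Finset.sum_neg_distrib]
    apply Finset.sum_congr rfl
    intro K hK
    rw [Finset.mem_Icc] at hK
    rw [← Finset.sum_neg_distrib, Finset.mul_sum]
    apply Finset.sum_congr rfl
    intro L hL
    rw [mem_cset] at hL
    rw [cast_collapse K L (by omega) hL.1, neg_neg]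
  rw [hRHS, Finset.sum_neg_distrib, master n]

lemma lamL_ofFn {K : ℕ} (ν : Fin (K+1) → ℕ) :
    lamL ((List.ofFn ν).take K) = lam K (fun i => ν i.castSucc) := by
  rw [lamL_take _ K (by rw [List.length_ofFn]; omega), lamf]
  congr 1
  funext i
  rw [List.getD_eq_getElem _ 0 (by rw [List.length_ofFn]; omega), List.getElem_ofFn]
  congr 1

/-- The explicit non-recursive formula for the antipode of `H^dif`:
`S a_n = -a_n - ∑_{k=1}^{n-1} (-1)^k ∑_{n_1+⋯+n_{k+1}=n, n_i>0}
  λ(n_1,…,n_k) a_{n_1} ⋯ a_{n_k} a_{n_{k+1}}`. -/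
theorem antipode_formula (n : ℕ) (hn : 1 ≤ n) :
    Sgen n =
      -(a n) - ∑ k ∈ Finset.Icc 1 (n - 1), (-1 : Hd) ^ k *
        ∑ ν ∈ (Finset.Nat.antidiagonalTuple (k + 1) n).filter (fun ν => ∀ i, 0 < ν i),
          (lam k (fun i => ν i.castSucc) : Hd) * (List.ofFn fun i => a (ν i)).prod := by
  rw [main_cset n hn]
  congr 1
  apply Finset.sum_congr rfl
  intro K hK
  congr 1
  rw [sum_cset]
  apply Finset.sum_congr rfl
  intro ν hν
  rw [lamL_ofFn ν, W_ofFn ν]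
  rfl

end
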